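/- If all the eigenvalues of the matrices A + λ B K (for λ ranging over the nonzero Laplacian eigenvalues) lie in the open left half-plane, then for the closed-loop consensus dynamics ẋ = (I_N ⊗ A + L ⊗ BK) x on a connected graph, the pairwise differences x_i − x_j converge to zero for all agents i, j. -/

import Mathlib

open Matrix Filter
open scoped Kronecker ENNReal NNReal

attribute [local instance] Matrix.linftyOpNormedAddCommGroup Matrix.linftyOpNormedSpace
  Matrix.linftyOpNormedRing Matrix.linftyOpNormedAlgebra

namespace ConsensusAux

variable {d : ℕ}

/-- Entry evaluation as a continuous linear map. -/
noncomputable def entryCLM (𝕜 : Type*) [RCLike 𝕜] {d : ℕ} (i j : Fin d) :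
    Matrix (Fin d) (Fin d) 𝕜 →L[𝕜] 𝕜 :=
  LinearMap.toContinuousLinearMap
    { toFun := fun M => M i j
      map_add' := fun _ _ => rfl
      map_smul' := fun _ _ => rfl }

@[simp] lemma entryCLM_apply (𝕜 : Type*) [RCLike 𝕜] {d : ℕ} (i j : Fin d)
    (M : Matrix (Fin d) (Fin d) 𝕜) : entryCLM 𝕜 i j M = M i j := rfl

/-- `mulVec` by a fixed vector, as a continuous linear map. -/
noncomputable def mulVecCLM (𝕜 : Type*) [RCLike 𝕜] {d : ℕ} (v : Fin d → 𝕜) :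
    Matrix (Fin d) (Fin d) 𝕜 →L[𝕜] (Fin d → 𝕜) :=
  LinearMap.toContinuousLinearMap
    { toFun := fun M => M *ᵥ v
      map_add' := fun M N => Matrix.add_mulVec M N v
      map_smul' := fun c M => Matrix.smul_mulVec c M v }

@[simp] lemma mulVecCLM_apply (𝕜 : Type*) [RCLike 𝕜] {d : ℕ} (v : Fin d → 𝕜)
    (M : Matrix (Fin d) (Fin d) 𝕜) : mulVecCLM 𝕜 v M = M *ᵥ v := rfl

lemma mulVec_pow_eigen (M : Matrix (Fin d) (Fin d) ℂ) {v : Fin d → ℂ} {μ : ℂ}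
    (hv : M *ᵥ v = μ • v) (k : ℕ) : (M ^ k) *ᵥ v = μ ^ k • v := by
  induction k with
  | zero => simp
  | succ k ih =>
      rw [pow_succ, ← Matrix.mulVec_mulVec, hv, Matrix.mulVec_smul, ih, smul_smul, pow_succ, mul_comm]

lemma mulVec_exp_eigen (M : Matrix (Fin d) (Fin d) ℂ) {v : Fin d → ℂ} {μ : ℂ}
    (hv : M *ᵥ v = μ • v) :
    (NormedSpace.exp M) *ᵥ v = Complex.exp μ • v := by
  have hsum : HasSum (fun k : ℕ => (Nat.factorial k : ℂ)⁻¹ • M ^ k) (NormedSpace.exp M) :=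
    NormedSpace.exp_series_hasSum_exp' (𝕂 := ℂ) M
  have h1 := (mulVecCLM ℂ v).hasSum hsum
  simp only [_root_.map_smul, mulVecCLM_apply] at h1
  have h2 : HasSum (fun k : ℕ => ((Nat.factorial k : ℂ)⁻¹ • μ ^ k) • v) ((NormedSpace.exp μ) • v) :=
    (NormedSpace.exp_series_hasSum_exp' (𝕂 := ℂ) μ).smul_const v
  have h3 : (fun k : ℕ => ((Nat.factorial k : ℂ)⁻¹ • μ ^ k) • v)
      = fun k : ℕ => (Nat.factorial k : ℂ)⁻¹ • (M ^ k *ᵥ v) := by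
    funext k
    rw [mulVec_pow_eigen M hv, smul_smul, smul_eq_mul]
  rw [h3] at h2
  rw [Complex.exp_eq_exp_ℂ]
  exact h1.unique h2

lemma mulVec_aeval_eigen (M : Matrix (Fin d) (Fin d) ℂ) {v : Fin d → ℂ} {μ : ℂ}
    (hv : M *ᵥ v = μ • v) (p : Polynomial ℂ) :
    (Polynomial.aeval M p) *ᵥ v = (p.eval μ) • v := by
  induction p using Polynomial.induction_on' with
  | add p q hp hq =>
      rw [map_add, Matrix.add_mulVec, hp, hq, Polynomial.eval_add, add_smul]
  | monomial k c =>
      rw [Polynomial.aeval_monomial, Polynomial.eval_monomial, ← Matrix.mulVec_mulVec,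
        mulVec_pow_eigen M hv, Matrix.mulVec_smul, Algebra.algebraMap_eq_smul_one,
        Matrix.smul_mulVec, Matrix.one_mulVec, smul_smul, mul_comm (μ ^ k) c]

lemma exists_eigen (M : Matrix (Fin d) (Fin d) ℂ) {μ : ℂ} (hμ : μ ∈ spectrum ℂ M) :
    ∃ v : Fin d → ℂ, v ≠ 0 ∧ M *ᵥ v = μ • v := by
  have h1 : μ ∈ spectrum ℂ (Matrix.toLinAlgEquiv' M) := by
    rw [AlgEquiv.spectrum_eq]; exact hμ
  have h2 : Module.End.HasEigenvalue (Matrix.toLinAlgEquiv' M) μ :=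
    Module.End.hasEigenvalue_iff_mem_spectrum.2 h1
  obtain ⟨v, hv⟩ := h2.exists_hasEigenvector
  refine ⟨v, hv.2, ?_⟩
  have h3 := hv.apply_eq_smul
  rwa [Matrix.toLinAlgEquiv'_apply] at h3

lemma exists_poly_exp (M : Matrix (Fin d) (Fin d) ℂ) :
    ∃ p : Polynomial ℂ, Polynomial.aeval M p = NormedSpace.exp M := by
  have hmem : NormedSpace.exp M ∈ Algebra.adjoin ℂ ({M} : Set (Matrix (Fin d) (Fin d) ℂ)) := by
    set S : Submodule ℂ (Matrix (Fin d) (Fin d) ℂ) :=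
      Subalgebra.toSubmodule (Algebra.adjoin ℂ ({M} : Set (Matrix (Fin d) (Fin d) ℂ)))
    have hclosed : IsClosed (S : Set (Matrix (Fin d) (Fin d) ℂ)) :=
      S.closed_of_finiteDimensional
    have hsum : HasSum (fun k : ℕ => (Nat.factorial k : ℂ)⁻¹ • M ^ k) (NormedSpace.exp M) :=
      NormedSpace.exp_series_hasSum_exp' (𝕂 := ℂ) M
    have hterm : ∀ k : ℕ, (Nat.factorial k : ℂ)⁻¹ • M ^ k ∈ S := fun k =>
      S.smul_mem _ (Subalgebra.pow_mem _ (Algebra.self_mem_adjoin_singleton ℂ M) k)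
    have : NormedSpace.exp M ∈ S :=
      hclosed.mem_of_tendsto hsum.tendsto_sum_nat
        (Filter.Eventually.of_forall fun k => S.sum_mem fun i _ => hterm i)
    exact this
  rw [Algebra.adjoin_singleton_eq_range_aeval] at hmem
  obtain ⟨p, hp⟩ := hmem
  exact ⟨p, hp⟩

lemma spectrum_exp_subset [NeZero d] (M : Matrix (Fin d) (Fin d) ℂ) :
    spectrum ℂ (NormedSpace.exp M) ⊆ Complex.exp '' spectrum ℂ M := by
  obtain ⟨p, hp⟩ := exists_poly_exp M
  rw [← hp, spectrum.map_polynomial_aeval_of_nonempty M p (spectrum.nonempty M)]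
  rintro z ⟨μ, hμ, rfl⟩
  refine ⟨μ, hμ, ?_⟩
  show Complex.exp μ = p.eval μ
  obtain ⟨v, hv0, hv⟩ := exists_eigen M hμ
  have h1 := mulVec_aeval_eigen M hv p
  rw [hp, mulVec_exp_eigen M hv] at h1
  have h2 : (Complex.exp μ - p.eval μ) • v = 0 := by
    rw [sub_smul, h1, sub_self]
  rcases smul_eq_zero.1 h2 with h | h
  · exact sub_eq_zero.1 h
  · exact absurd h hv0

/-- Main decay estimate: if all eigenvalues have negative real part then `exp (t • M) → 0`. -/
lemma tendsto_exp_smul_zero (M : Matrix (Fin d) (Fin d) ℂ)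
    (h : ∀ z ∈ spectrum ℂ M, z.re < 0) :
    Tendsto (fun t : ℝ => NormedSpace.exp (t • M)) atTop (nhds 0) := by
  rcases Nat.eq_zero_or_pos d with hd | hd
  · have hsub : Subsingleton (Matrix (Fin d) (Fin d) ℂ) := by
      subst hd
      exact ⟨fun a b => by ext i j; exact i.elim0⟩
    have : (fun t : ℝ => NormedSpace.exp (t • M)) = fun _ => 0 := by
      funext t; exact Subsingleton.elim _ _
    rw [this]; exact tendsto_const_nhds
  haveI : NeZero d := ⟨hd.ne'⟩
  haveI : Nonempty (Fin d) := ⟨⟨0, hd⟩⟩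
  -- maximum of the real parts on the spectrum
  obtain ⟨z0, hz0mem, hz0max⟩ := (spectrum.isCompact M).exists_isMaxOn
    (spectrum.nonempty M) Complex.continuous_re.continuousOn
  set r : ℝ := Real.exp z0.re with hr_def
  have hr0 : 0 < r := Real.exp_pos _
  have hr1 : r < 1 := by
    rw [hr_def, Real.exp_lt_one_iff]
    exact h z0 hz0mem
  set E := NormedSpace.exp M with hE_def
  have hspec : ∀ w ∈ spectrum ℂ E, ‖w‖ ≤ r := by
    intro w hw
    obtain ⟨μ, hμ, rfl⟩ := spectrum_exp_subset M hw
    rw [Complex.norm_exp]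
    exact Real.exp_le_exp.2 (hz0max hμ)
  have hsr : spectralRadius ℂ E ≤ ENNReal.ofReal r := by
    rw [spectralRadius]
    refine iSup₂_le fun w hw => ?_
    rw [← enorm_eq_nnnorm, ← ofReal_norm]
    exact ENNReal.ofReal_le_ofReal (hspec w hw)
  set r' : ℝ := (r + 1) / 2 with hr'_def
  have hr'0 : 0 < r' := by positivity
  have hrr' : r < r' := by rw [hr'_def]; linarith
  have hr'1 : r' < 1 := by rw [hr'_def]; linarith
  have hlt : spectralRadius ℂ E < ENNReal.ofReal r' :=
    lt_of_le_of_lt hsr ((ENNReal.ofReal_lt_ofReal_iff hr'0).2 hrr')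
  have hgel := spectrum.pow_nnnorm_pow_one_div_tendsto_nhds_spectralRadius E
  have hev : ∀ᶠ j : ℕ in atTop, (‖E ^ j‖₊ : ℝ≥0∞) ^ (1 / (j : ℝ)) < ENNReal.ofReal r' :=
    hgel.eventually_lt_const hlt
  have hnorm : ∀ᶠ j : ℕ in atTop, ‖E ^ j‖ ≤ r' ^ j := by
    filter_upwards [hev, eventually_ge_atTop 1] with j hj hj1
    have hj0 : (j : ℝ) ≠ 0 := by positivity
    have h2 := ENNReal.rpow_le_rpow hj.le (le_of_lt (by positivity : (0:ℝ) < (j:ℝ)))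
    rw [← ENNReal.rpow_mul, one_div, inv_mul_cancel₀ hj0, ENNReal.rpow_one,
      ENNReal.ofReal_rpow_of_pos hr'0] at h2
    rw [← enorm_eq_nnnorm, ← ofReal_norm] at h2
    have h3 := (ENNReal.ofReal_le_ofReal_iff (by positivity)).1 h2
    rwa [Real.rpow_natCast] at h3
  have hEj : Tendsto (fun j : ℕ => ‖E ^ j‖) atTop (nhds 0) :=
    squeeze_zero' (Eventually.of_forall fun j => norm_nonneg _) hnorm
      (tendsto_pow_atTop_nhds_zero_of_lt_one hr'0.le hr'1)
  obtain ⟨C, hC⟩ : ∃ C, ∀ s ∈ Set.Icc (0:ℝ) 1, ‖NormedSpace.exp (s • M)‖ ≤ C := by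
    have hcont : ContinuousOn (fun s : ℝ => NormedSpace.exp (s • M)) (Set.Icc 0 1) :=
      (NormedSpace.exp_continuous.comp (continuous_id.smul continuous_const)).continuousOn
    exact isCompact_Icc.exists_bound_of_continuousOn hcont
  refine tendsto_zero_iff_norm_tendsto_zero.2 ?_
  have hub : ∀ᶠ t : ℝ in atTop, ‖NormedSpace.exp (t • M)‖ ≤ ‖E ^ ⌊t⌋₊‖ * C := by
    filter_upwards [eventually_ge_atTop (0:ℝ)] with t ht
    have hsplit : t • M = ((⌊t⌋₊ : ℝ)) • M + (t - (⌊t⌋₊ : ℝ)) • M := by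
      rw [← add_smul]; ring_nf
    have hcomm : Commute (((⌊t⌋₊ : ℝ)) • M) ((t - (⌊t⌋₊ : ℝ)) • M) :=
      ((Commute.refl M).smul_left _).smul_right _
    have h1 : NormedSpace.exp (((⌊t⌋₊ : ℝ)) • M) = E ^ ⌊t⌋₊ := by
      erw [hE_def, ← NormedSpace.exp_nsmul, Nat.cast_smul_eq_nsmul]
      rfl
    have hmem : t - (⌊t⌋₊ : ℝ) ∈ Set.Icc (0:ℝ) 1 :=
      ⟨sub_nonneg.2 (Nat.floor_le ht), by
        have := (Nat.lt_floor_add_one t).le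
        linarith⟩
    calc ‖NormedSpace.exp (t • M)‖
        = ‖E ^ ⌊t⌋₊ * NormedSpace.exp ((t - (⌊t⌋₊ : ℝ)) • M)‖ := by
          erw [hsplit, NormedSpace.exp_add_of_commute hcomm, h1]
          rfl
      _ ≤ ‖E ^ ⌊t⌋₊‖ * ‖NormedSpace.exp ((t - (⌊t⌋₊ : ℝ)) • M)‖ := norm_mul_le _ _
      _ ≤ ‖E ^ ⌊t⌋₊‖ * C :=
          mul_le_mul_of_nonneg_left (hC _ hmem) (norm_nonneg _)
  have hto : Tendsto (fun t : ℝ => ‖E ^ ⌊t⌋₊‖ * C) atTop (nhds 0) := by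
    have := (hEj.comp (tendsto_nat_floor_atTop (α := ℝ))).mul_const C
    simpa using this
  exact squeeze_zero' (Eventually.of_forall fun t => norm_nonneg _) hub hto

lemma tendsto_exp_entry_zero (M : Matrix (Fin d) (Fin d) ℝ)
    (h : ∀ z ∈ spectrum ℂ (M.map Complex.ofReal), z.re < 0) (a b : Fin d) :
    Tendsto (fun t : ℝ => NormedSpace.exp (t • M) a b) atTop (nhds 0) := by
  have hlin : IsLinearMap ℝ (fun P : Matrix (Fin d) (Fin d) ℝ => P.map Complex.ofReal) := by
    constructor
    · intro P Q; ext i j; simp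
    · intro c P; ext i j; simp [Complex.real_smul]
  have hcont : Continuous fun P : Matrix (Fin d) (Fin d) ℝ => P.map Complex.ofReal :=
    (hlin.mk' _).continuous_of_finiteDimensional
  have hkey : ∀ t : ℝ, (NormedSpace.exp (t • M)).map Complex.ofReal
      = NormedSpace.exp (t • M.map Complex.ofReal) := by
    intro t
    have h1 := NormedSpace.map_exp (Complex.ofRealHom.mapMatrix
      (m := Fin d)) (by exact hcont) (t • M)
    rw [RingHom.mapMatrix_apply, RingHom.mapMatrix_apply] at h1
    have hco : (⇑Complex.ofRealHom : ℝ → ℂ) = Complex.ofReal := funext Complex.ofRealHom_eq_coe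
    rw [hco, show ((t • M).map (Complex.ofReal : ℝ → ℂ)) = t • M.map Complex.ofReal from
      hlin.map_smul t M] at h1
    exact h1
  have hdec := tendsto_exp_smul_zero (M.map Complex.ofReal) h
  have hentry : Tendsto (fun t : ℝ => (NormedSpace.exp (t • M.map Complex.ofReal)) a b)
      atTop (nhds 0) := by
    have hc : Continuous fun P : Matrix (Fin d) (Fin d) ℂ => P a b := (entryCLM ℂ a b).continuous
    have := (hc.tendsto 0).comp hdec
    simpa [Function.comp_def] using this
  have hre := (Complex.continuous_re.tendsto 0).comp hentry
  have heq : (fun t : ℝ => NormedSpace.exp (t • M) a b)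
      = fun t : ℝ => ((NormedSpace.exp (t • M.map Complex.ofReal)) a b).re := by
    funext t
    rw [← hkey t]
    simp [Matrix.map_apply]
  rw [heq]
  simpa [Function.comp_def] using hre

/-- Solutions of the linear ODE `y' = M y` are given by the matrix exponential. -/
lemma ode_solution (M : Matrix (Fin d) (Fin d) ℝ) (y : ℝ → Fin d → ℝ)
    (hy : ∀ t, HasDerivAt y (M *ᵥ y t) t) (t : ℝ) :
    y t = NormedSpace.exp (t • M) *ᵥ y 0 := by
  set E : ℝ → Matrix (Fin d) (Fin d) ℝ := fun s => NormedSpace.exp (s • (-M)) with hE_def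
  have hEderiv : ∀ (s : ℝ) (i j : Fin d),
      HasDerivAt (fun s : ℝ => E s i j) ((E s * (-M)) i j) s := by
    intro s i j
    have h1 : HasDerivAt (fun s : ℝ => NormedSpace.exp (s • (-M)))
        (NormedSpace.exp (s • (-M)) * (-M)) s := hasDerivAt_exp_smul_const (-M) s
    exact (entryCLM ℝ i j).hasFDerivAt.comp_hasDerivAt s h1
  have hyj : ∀ (s : ℝ) (j : Fin d), HasDerivAt (fun s => y s j) ((M *ᵥ y s) j) s :=
    fun s j => hasDerivAt_pi.1 (hy s) j
  have hz : ∀ (i : Fin d) (s : ℝ),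
      HasDerivAt (fun s => ∑ j, E s i j * y s j) 0 s := by
    intro i s
    have h1 : HasDerivAt (fun s => ∑ j, E s i j * y s j)
        (∑ j, ((E s * (-M)) i j * y s j + E s i j * (M *ᵥ y s) j)) s :=
      HasDerivAt.fun_sum fun j _ => (hEderiv s i j).mul (hyj s j)
    convert h1 using 1
    have e1 : ∑ j, (E s * (-M)) i j * y s j = ((E s * (-M)) *ᵥ y s) i := by
      simp [Matrix.mulVec, dotProduct]
    have e2 : ∑ j, E s i j * (M *ᵥ y s) j = (E s *ᵥ (M *ᵥ y s)) i := by
      simp [Matrix.mulVec, dotProduct]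
    rw [Finset.sum_add_distrib, e1, e2, Matrix.mulVec_mulVec, Matrix.mul_neg,
      Matrix.neg_mulVec]
    simp
  have hconst : ∀ (i : Fin d) (s : ℝ),
      (∑ j, E s i j * y s j) = ∑ j, E 0 i j * y 0 j := by
    intro i s
    exact is_const_of_deriv_eq_zero (fun u => (hz i u).differentiableAt)
      (fun u => (hz i u).deriv) s 0
  have h0 : E 0 = 1 := by
    rw [hE_def]
    simp
  have hEy : ∀ s, E s *ᵥ y s = y 0 := by
    intro s
    funext i
    calc (E s *ᵥ y s) i = ∑ j, E s i j * y s j := by simp [Matrix.mulVec, dotProduct]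
      _ = ∑ j, E 0 i j * y 0 j := hconst i s
      _ = (E 0 *ᵥ y 0) i := by simp [Matrix.mulVec, dotProduct]
      _ = y 0 i := by rw [h0, Matrix.one_mulVec]
  have hinv : NormedSpace.exp (t • M) * E t = 1 := by
    rw [hE_def]
    beta_reduce
    erw [← NormedSpace.exp_add_of_commute ((((Commute.refl M).neg_right).smul_left t).smul_right t)]
    erw [smul_neg, add_neg_cancel, NormedSpace.exp_zero]
  calc y t = (1 : Matrix (Fin d) (Fin d) ℝ) *ᵥ y t := (Matrix.one_mulVec _).symm
    _ = (NormedSpace.exp (t • M) * E t) *ᵥ y t := by rw [hinv]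
    _ = NormedSpace.exp (t • M) *ᵥ (E t *ᵥ y t) := by rw [← Matrix.mulVec_mulVec]
    _ = NormedSpace.exp (t • M) *ᵥ y 0 := by rw [hEy t]

lemma tendsto_ode_zero (M : Matrix (Fin d) (Fin d) ℝ)
    (h : ∀ z ∈ spectrum ℂ (M.map Complex.ofReal), z.re < 0)
    (y : ℝ → Fin d → ℝ) (hy : ∀ t, HasDerivAt y (M *ᵥ y t) t) (ℓ : Fin d) :
    Tendsto (fun t : ℝ => y t ℓ) atTop (nhds 0) := by
  have hsol := ode_solution M y hy
  have heq : (fun t : ℝ => y t ℓ)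
      = fun t : ℝ => ∑ b, NormedSpace.exp (t • M) ℓ b * y 0 b := by
    funext t
    rw [hsol t]
    simp [Matrix.mulVec, dotProduct]
  rw [heq]
  have hsum := tendsto_finset_sum (Finset.univ : Finset (Fin d))
    (fun b _ => (tendsto_exp_entry_zero M h ℓ b).mul_const (y 0 b))
  simpa using hsum

lemma key_sum {N n : ℕ} (L : Matrix (Fin N) (Fin N) ℝ) (hLs : L.IsSymm)
    (A : Matrix (Fin n) (Fin n) ℝ) (BK : Matrix (Fin n) (Fin n) ℝ)
    (u : Fin N → ℝ) (lam : ℝ) (hu : L *ᵥ u = lam • u)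
    (w : Fin N × Fin n → ℝ) (ℓ : Fin n) :
    ∑ p : Fin N, u p * ((((1 : Matrix (Fin N) (Fin N) ℝ) ⊗ₖ A + L ⊗ₖ BK) *ᵥ w) (p, ℓ))
      = ((A + lam • BK) *ᵥ (fun dd : Fin n => ∑ q : Fin N, u q * w (q, dd))) ℓ := by
  have hLu : ∀ q, ∑ p, u p * L p q = lam * u q := by
    intro q
    have h1 := congrFun hu q
    calc ∑ p, u p * L p q = ∑ p, L q p * u p := by
          refine Finset.sum_congr rfl fun p _ => ?_
          have h2 := congrFun (congrFun hLs q) p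
          rw [Matrix.transpose_apply] at h2
          rw [mul_comm, h2]
      _ = lam * u q := by
          simpa [Matrix.mulVec, dotProduct, Pi.smul_apply, smul_eq_mul] using h1
  have step1 : ∀ p : Fin N, ((((1 : Matrix (Fin N) (Fin N) ℝ) ⊗ₖ A + L ⊗ₖ BK) *ᵥ w) (p, ℓ))
      = (∑ dd, A ℓ dd * w (p, dd)) + ∑ q, ∑ dd, L p q * BK ℓ dd * w (q, dd) := by
    intro p
    calc ((((1 : Matrix (Fin N) (Fin N) ℝ) ⊗ₖ A + L ⊗ₖ BK) *ᵥ w) (p, ℓ))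
        = ∑ q, ∑ dd, (((if p = q then (1:ℝ) else 0) * A ℓ dd) + L p q * BK ℓ dd) * w (q, dd) := by
          simp [Matrix.mulVec, dotProduct, Fintype.sum_prod_type,
            Matrix.kroneckerMap_apply, Matrix.one_apply]
      _ = ∑ q, ((if p = q then (∑ dd, A ℓ dd * w (q, dd)) else 0)
            + ∑ dd, L p q * BK ℓ dd * w (q, dd)) := by
          refine Finset.sum_congr rfl fun q _ => ?_
          split_ifs with hpq
          · rw [← Finset.sum_add_distrib]
            refine Finset.sum_congr rfl fun dd _ => by ring
          · rw [zero_add]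
            refine Finset.sum_congr rfl fun dd _ => by ring
      _ = (∑ dd, A ℓ dd * w (p, dd)) + ∑ q, ∑ dd, L p q * BK ℓ dd * w (q, dd) := by
          rw [Finset.sum_add_distrib, Finset.sum_ite_eq]
          simp
  calc ∑ p : Fin N, u p * ((((1 : Matrix (Fin N) (Fin N) ℝ) ⊗ₖ A + L ⊗ₖ BK) *ᵥ w) (p, ℓ))
      = ∑ p, (∑ dd, u p * (A ℓ dd * w (p, dd)))
          + ∑ p, ∑ q, ∑ dd, u p * (L p q * BK ℓ dd * w (q, dd)) := by
        rw [← Finset.sum_add_distrib]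
        refine Finset.sum_congr rfl fun p _ => ?_
        rw [step1 p, mul_add, Finset.mul_sum, Finset.mul_sum]
        congr 1
        refine Finset.sum_congr rfl fun q _ => ?_
        rw [Finset.mul_sum]
    _ = ∑ q, (∑ dd, u q * (A ℓ dd * w (q, dd)))
          + ∑ q, ∑ dd, (lam * u q) * (BK ℓ dd * w (q, dd)) := by
        congr 1
        rw [Finset.sum_comm]
        refine Finset.sum_congr rfl fun q _ => ?_
        rw [Finset.sum_comm]
        refine Finset.sum_congr rfl fun dd _ => ?_
        calc ∑ p, u p * (L p q * BK ℓ dd * w (q, dd))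
            = (∑ p, u p * L p q) * (BK ℓ dd * w (q, dd)) := by
              rw [Finset.sum_mul]
              refine Finset.sum_congr rfl fun p _ => by ring
          _ = (lam * u q) * (BK ℓ dd * w (q, dd)) := by rw [hLu q]
    _ = ((A + lam • BK) *ᵥ (fun dd : Fin n => ∑ q : Fin N, u q * w (q, dd))) ℓ := by
        simp only [Matrix.mulVec, dotProduct, Matrix.add_apply, Matrix.smul_apply,
          smul_eq_mul, Finset.mul_sum, add_mul]
        rw [← Finset.sum_add_distrib, Finset.sum_comm]
        refine Finset.sum_congr rfl fun q _ => ?_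
        rw [← Finset.sum_add_distrib]
        refine Finset.sum_congr rfl fun dd _ => by ring

end ConsensusAux

/-- If, for every nonzero Laplacian eigenvalue `μ` of a connected undirected
simple graph, the matrix `A + μ B K` is Hurwitz (all its complex eigenvalues
lie in the open left half-plane), then every solution of the closed-loop
consensus dynamics `ẋ = (I_N ⊗ A + L ⊗ BK) x` achieves consensus: all
pairwise differences `x_i - x_j` of agent states converge to zero. -/
theorem hurwitz_modes_implies_consensus (N n m : ℕ)
    (G : SimpleGraph (Fin N)) [DecidableRel G.Adj] (hG : G.Connected)
    (A : Matrix (Fin n) (Fin n) ℝ) (B : Matrix (Fin n) (Fin m) ℝ)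
    (K : Matrix (Fin m) (Fin n) ℝ)
    (hHurwitz : ∀ μ ∈ spectrum ℝ (G.lapMatrix ℝ), μ ≠ 0 →
      ∀ z ∈ spectrum ℂ ((A + μ • (B * K)).map Complex.ofReal), z.re < 0)
    (x : ℝ → (Fin N × Fin n → ℝ))
    (hx : ∀ t : ℝ, HasDerivAt x
      (((1 : Matrix (Fin N) (Fin N) ℝ) ⊗ₖ A + (G.lapMatrix ℝ) ⊗ₖ (B * K))
        *ᵥ (x t)) t) :
    ∀ i j : Fin N,
      Tendsto (fun t : ℝ => (fun k : Fin n => x t (i, k) - x t (j, k)))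
        atTop (nhds 0) := by
  intro i j
  rcases isEmpty_or_nonempty (Fin n) with hn | hn
  · have hfun : (fun t : ℝ => (fun k : Fin n => x t (i, k) - x t (j, k))) = fun _ => 0 := by
      funext t
      exact Subsingleton.elim _ _
    rw [hfun]
    exact tendsto_const_nhds
  classical
  set L := G.lapMatrix ℝ with hL_def
  have hL : L.IsHermitian := (SimpleGraph.posSemidef_lapMatrix ℝ G).isHermitian
  set u : Fin N → Fin N → ℝ := fun k => ⇑(hL.eigenvectorBasis k) with hu_def
  set lam : Fin N → ℝ := fun k => hL.eigenvalues k with hlam_def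
  have hu : ∀ k, L *ᵥ u k = lam k • u k := fun k => hL.mulVec_eigenvectorBasis k
  set Ak : Fin N → Matrix (Fin n) (Fin n) ℝ := fun k => A + lam k • (B * K) with hAk_def
  set y : Fin N → ℝ → Fin n → ℝ := fun k t => fun dd => ∑ q, u k q * x t (q, dd) with hy_def
  have hyode : ∀ k t, HasDerivAt (y k) (Ak k *ᵥ (y k t)) t := by
    intro k t
    rw [hasDerivAt_pi]
    intro ℓ
    have h1 : HasDerivAt (fun t => ∑ q, u k q * x t (q, ℓ))
        (∑ q, u k q *
          ((((1 : Matrix (Fin N) (Fin N) ℝ) ⊗ₖ A + L ⊗ₖ (B * K)) *ᵥ (x t)) (q, ℓ))) t :=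
      HasDerivAt.fun_sum fun q _ => ((hasDerivAt_pi.1 (hx t)) (q, ℓ)).const_mul (u k q)
    have h2 := ConsensusAux.key_sum L (SimpleGraph.isSymm_lapMatrix ℝ G) A (B * K)
      (u k) (lam k) (hu k) (x t) ℓ
    rw [h2] at h1
    exact h1
  have hdecay : ∀ k, lam k ≠ 0 → ∀ ℓ, Tendsto (fun t => y k t ℓ) atTop (nhds 0) := by
    intro k hk ℓ
    have hspec : lam k ∈ spectrum ℝ L := hL.eigenvalues_mem_spectrum_real k
    exact ConsensusAux.tendsto_ode_zero (Ak k) (hHurwitz (lam k) hspec hk) (y k) (hyode k) ℓ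
  have hzero : ∀ k, lam k = 0 → u k i = u k j := by
    intro k hk
    have h1 : Matrix.toLin' L (u k) = 0 := by
      rw [Matrix.toLin'_apply, hu k, hk, zero_smul]
    exact (SimpleGraph.lapMatrix_mulVec_eq_zero_iff_forall_reachable G).1 h1
      i j (hG.preconnected i j)
  have hON : ∀ p q : Fin N, ∑ k, u k p * u k q = if p = q then (1:ℝ) else 0 := by
    intro p q
    have hUU : (hL.eigenvectorUnitary : Matrix (Fin N) (Fin N) ℝ)
        * star (hL.eigenvectorUnitary : Matrix (Fin N) (Fin N) ℝ) = 1 :=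
      Matrix.mem_unitaryGroup_iff.1 hL.eigenvectorUnitary.2
    have h3 := congrFun (congrFun hUU p) q
    simpa [Matrix.mul_apply, Matrix.star_apply, Matrix.one_apply] using h3
  have hexpand : ∀ (t : ℝ) (ℓ : Fin n),
      x t (i, ℓ) - x t (j, ℓ) = ∑ k, (u k i - u k j) * y k t ℓ := by
    intro t ℓ
    calc x t (i, ℓ) - x t (j, ℓ)
        = ∑ q, ((if i = q then (1:ℝ) else 0) - (if j = q then (1:ℝ) else 0)) * x t (q, ℓ) := by
          simp [sub_mul, ite_mul, Finset.sum_sub_distrib, Finset.sum_ite_eq]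
      _ = ∑ q, (∑ k, (u k i - u k j) * u k q) * x t (q, ℓ) := by
          refine Finset.sum_congr rfl fun q _ => ?_
          congr 1
          have : ∀ k, (u k i - u k j) * u k q = u k i * u k q - u k j * u k q :=
            fun k => sub_mul _ _ _
          rw [Finset.sum_congr rfl fun k _ => this k, Finset.sum_sub_distrib, hON i q, hON j q]
      _ = ∑ k, (u k i - u k j) * y k t ℓ := by
          calc ∑ q, (∑ k, (u k i - u k j) * u k q) * x t (q, ℓ)
              = ∑ q, ∑ k, (u k i - u k j) * u k q * x t (q, ℓ) := by
                refine Finset.sum_congr rfl fun q _ => Finset.sum_mul _ _ _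
            _ = ∑ k, ∑ q, (u k i - u k j) * u k q * x t (q, ℓ) := Finset.sum_comm
            _ = ∑ k, (u k i - u k j) * y k t ℓ := by
                refine Finset.sum_congr rfl fun k _ => ?_
                rw [hy_def]
                rw [Finset.mul_sum]
                refine Finset.sum_congr rfl fun q _ => by ring
  have hfun : (fun t : ℝ => (fun ℓ : Fin n => x t (i, ℓ) - x t (j, ℓ)))
      = fun t : ℝ => (fun ℓ : Fin n => ∑ k, (u k i - u k j) * y k t ℓ) :=
    funext fun t => funext fun ℓ => hexpand t ℓ
  rw [hfun, tendsto_pi_nhds]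
  intro ℓ
  have hterm : ∀ k : Fin N,
      Tendsto (fun t => (u k i - u k j) * y k t ℓ) atTop (nhds 0) := by
    intro k
    by_cases hk : lam k = 0
    · simp only [hzero k hk, sub_self, zero_mul]
      exact tendsto_const_nhds
    · simpa using (hdecay k hk ℓ).const_mul (u k i - u k j)
  have hsum := tendsto_finset_sum (Finset.univ : Finset (Fin N)) fun k _ => hterm k
  simpa using hsum
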